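/- Let β = (x + y²(y+z²)², y+z², z) and π = (y,x,z) acting on K[x,y,z]. Then for all m ≥ 1, n ≥ 0, the polynomial obtained by applying β to x^m z^n, i.e. (x + y²(y+z²)²)^m z^n, lies in P_{m,n}^*: its support is contained in P_{m,n} = {(i,j,k) ∈ ℕ³ : 4i+j ≤ 4m, 4i+k ≤ 4m+n, 8i+2j+k ≤ 8m+n}, its leading exponent in the lex order with y > z > x is (0, 4m, n), and its leading exponent in the lex order with z > x > y is (0, 2m, 4m+n). -/

import Mathlib

open MvPolynomial

/-- Lexicographic key: `toLex (p, toLex (q, r))`. -/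
def lkey (p q r : ℕ) : ℕ ×ₗ (ℕ ×ₗ ℕ) := toLex (p, toLex (q, r))

variable {K : Type*} [Field K]

/-- `ldeg₂ P = (i,j,k)`: leading exponent in the lex order with `y > z > x`. -/
def HasLdeg2 (P : MvPolynomial (Fin 3) K) (i j k : ℕ) : Prop :=
  (∃ d ∈ P.support, d 0 = i ∧ d 1 = j ∧ d 2 = k) ∧
  ∀ d ∈ P.support, lkey (d 1) (d 2) (d 0) ≤ lkey j k i

/-- `ldeg₃ P = (i,j,k)`: leading exponent in the lex order with `z > x > y`. -/
def HasLdeg3 (P : MvPolynomial (Fin 3) K) (i j k : ℕ) : Prop :=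
  (∃ d ∈ P.support, d 0 = i ∧ d 1 = j ∧ d 2 = k) ∧
  ∀ d ∈ P.support, lkey (d 2) (d 0) (d 1) ≤ lkey k i j

namespace XmznAux

lemma lkey_le {p q r p' q' r' : ℕ}
    (h : p < p' ∨ (p = p' ∧ (q < q' ∨ (q = q' ∧ r ≤ r')))) :
    lkey p q r ≤ lkey p' q' r' := by
  simp only [lkey, Prod.Lex.le_iff]
  tauto

noncomputable def B (K : Type*) [Field K] : MvPolynomial (Fin 3) K :=
  X 0 + (X 1) ^ 2 * (X 1 + (X 2) ^ 2) ^ 2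

noncomputable def m1 : Fin 3 →₀ ℕ := Finsupp.single 0 1
noncomputable def m2 : Fin 3 →₀ ℕ := Finsupp.single 1 4
noncomputable def m3 : Fin 3 →₀ ℕ := Finsupp.single 1 3 + Finsupp.single 2 2
noncomputable def m4 : Fin 3 →₀ ℕ := Finsupp.single 1 2 + Finsupp.single 2 4

lemma m1_apply : m1 0 = 1 ∧ m1 1 = 0 ∧ m1 2 = 0 := by
  refine ⟨?_, ?_, ?_⟩ <;> simp [m1, Finsupp.single_apply]
lemma m2_apply : m2 0 = 0 ∧ m2 1 = 4 ∧ m2 2 = 0 := by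
  refine ⟨?_, ?_, ?_⟩ <;> simp [m2, Finsupp.single_apply]
lemma m3_apply : m3 0 = 0 ∧ m3 1 = 3 ∧ m3 2 = 2 := by
  refine ⟨?_, ?_, ?_⟩ <;> simp [m3, Finsupp.add_apply, Finsupp.single_apply]
lemma m4_apply : m4 0 = 0 ∧ m4 1 = 2 ∧ m4 2 = 4 := by
  refine ⟨?_, ?_, ?_⟩ <;> simp [m4, Finsupp.add_apply, Finsupp.single_apply]

lemma B_eq : B K = monomial m1 1 + monomial m2 1 + (monomial m3 2 + monomial m4 1) := by
  have h1 : (monomial m1 (1 : K)) = X 0 := by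
    rw [m1, ← X_pow_eq_monomial, pow_one]
  have h2 : (monomial m2 (1 : K)) = X 1 ^ 4 := by
    rw [m2, ← X_pow_eq_monomial]
  have h3 : (monomial m3 (2 : K)) = 2 * (X 1 ^ 3 * X 2 ^ 2) := by
    have hC : (C (2:K) : MvPolynomial (Fin 3) K) = 2 := by
      exact_mod_cast map_ofNat (C : K →+* MvPolynomial (Fin 3) K) 2
    rw [m3, X_pow_eq_monomial, X_pow_eq_monomial, monomial_mul, one_mul, ← hC,
      C_mul_monomial, mul_one]
  have h4 : (monomial m4 (1 : K)) = X 1 ^ 2 * X 2 ^ 4 := by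
    rw [m4, X_pow_eq_monomial, X_pow_eq_monomial, monomial_mul, one_mul]
  rw [h1, h2, h3, h4, B]
  ring

lemma support_B : ∀ d ∈ (B K).support, d = m1 ∨ d = m2 ∨ d = m3 ∨ d = m4 := by
  intro d hd
  rw [B_eq] at hd
  have h := support_add hd
  rcases Finset.mem_union.mp h with h | h
  · rcases Finset.mem_union.mp (support_add h) with h | h
    · left; exact Finset.mem_singleton.mp (support_monomial_subset h)
    · right; left; exact Finset.mem_singleton.mp (support_monomial_subset h)
  · rcases Finset.mem_union.mp (support_add h) with h | h
    · right; right; left; exact Finset.mem_singleton.mp (support_monomial_subset h)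
    · right; right; right; exact Finset.mem_singleton.mp (support_monomial_subset h)

lemma weight_B : ∀ d ∈ (B K).support,
    4 * d 0 + d 1 ≤ 4 ∧ 4 * d 0 + d 2 ≤ 4 ∧ 8 * d 0 + 2 * d 1 + d 2 ≤ 8 := by
  intro d hd
  rcases support_B d hd with h | h | h | h <;> subst h
  · obtain ⟨a, b, c⟩ := m1_apply; rw [a, b, c]; omega
  · obtain ⟨a, b, c⟩ := m2_apply; rw [a, b, c]; omega
  · obtain ⟨a, b, c⟩ := m3_apply; rw [a, b, c]; omega
  · obtain ⟨a, b, c⟩ := m4_apply; rw [a, b, c]; omega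

lemma supp_pow_weight (f : (Fin 3 →₀ ℕ) → ℕ)
    (hf : ∀ a b, f (a + b) = f a + f b) (c : ℕ)
    (p : MvPolynomial (Fin 3) K) (hp : ∀ d ∈ p.support, f d ≤ c) :
    ∀ m : ℕ, ∀ d ∈ (p ^ m).support, f d ≤ m * c := by
  have hf0 : f 0 = 0 := by
    have := hf 0 0
    simp at this
    omega
  intro m
  induction m with
  | zero =>
    intro d hd
    rw [pow_zero] at hd
    have hd0 : d = 0 := by
      have h1 : (1 : MvPolynomial (Fin 3) K) = monomial 0 1 := by
        simp
      rw [h1] at hd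
      exact Finset.mem_singleton.mp (support_monomial_subset hd)
    rw [hd0, hf0]
    omega
  | succ k ih =>
    intro d hd
    rw [pow_succ] at hd
    obtain ⟨u, hu, v, hv, huv⟩ := Finset.mem_add.mp (support_mul _ _ hd)
    have h1 := ih u hu
    have h2 := hp v hv
    rw [← huv, hf]
    calc f u + f v ≤ k * c + c := by omega
    _ = (k + 1) * c := by ring

lemma weight_B_pow (m : ℕ) : ∀ d ∈ ((B K) ^ m).support,
    4 * d 0 + d 1 ≤ 4 * m ∧ 4 * d 0 + d 2 ≤ 4 * m ∧ 8 * d 0 + 2 * d 1 + d 2 ≤ 8 * m := by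
  intro d hd
  have h1 := supp_pow_weight (fun d => 4 * d 0 + d 1)
    (by intro a b; simp only [Finsupp.add_apply]; ring) 4 (B K)
    (fun d hd => (weight_B d hd).1) m d hd
  have h2 := supp_pow_weight (fun d => 4 * d 0 + d 2)
    (by intro a b; simp only [Finsupp.add_apply]; ring) 4 (B K)
    (fun d hd => (weight_B d hd).2.1) m d hd
  have h3 := supp_pow_weight (fun d => 8 * d 0 + 2 * d 1 + d 2)
    (by intro a b; simp only [Finsupp.add_apply]; ring) 8 (B K)
    (fun d hd => (weight_B d hd).2.2) m d hd
  omega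

lemma coeff_mul_unique (p q : MvPolynomial (Fin 3) K) (u v : Fin 3 →₀ ℕ)
    (h : ∀ x ∈ p.support, ∀ y ∈ q.support, x + y = u + v → x = u ∧ y = v) :
    coeff (u + v) (p * q) = coeff u p * coeff v q := by
  rw [coeff_mul]
  apply Finset.sum_eq_single (u, v)
  · intro b hb hne
    rw [Finset.HasAntidiagonal.mem_antidiagonal] at hb
    by_cases h1 : b.1 ∈ p.support
    · by_cases h2 : b.2 ∈ q.support
      · obtain ⟨e1, e2⟩ := h _ h1 _ h2 hb
        exact absurd (Prod.ext e1 e2) hne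
      · rw [MvPolynomial.notMem_support_iff.mp h2, mul_zero]
    · rw [MvPolynomial.notMem_support_iff.mp h1, zero_mul]
  · intro h'
    simp at h'

lemma m1_ne_m2 : m1 ≠ m2 := by
  intro h; have := DFunLike.congr_fun h 0
  rw [m1_apply.1, m2_apply.1] at this; omega
lemma m3_ne_m2 : m3 ≠ m2 := by
  intro h; have := DFunLike.congr_fun h 2
  rw [m3_apply.2.2, m2_apply.2.2] at this; omega
lemma m4_ne_m2 : m4 ≠ m2 := by
  intro h; have := DFunLike.congr_fun h 2
  rw [m4_apply.2.2, m2_apply.2.2] at this; omega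
lemma m1_ne_m4 : m1 ≠ m4 := by
  intro h; have := DFunLike.congr_fun h 0
  rw [m1_apply.1, m4_apply.1] at this; omega
lemma m2_ne_m4 : m2 ≠ m4 := by
  intro h; have := DFunLike.congr_fun h 2
  rw [m2_apply.2.2, m4_apply.2.2] at this; omega
lemma m3_ne_m4 : m3 ≠ m4 := by
  intro h; have := DFunLike.congr_fun h 2
  rw [m3_apply.2.2, m4_apply.2.2] at this; omega

lemma coeff_B_m2 : coeff m2 (B K) = 1 := by
  rw [B_eq, coeff_add, coeff_add, coeff_add, coeff_monomial, coeff_monomial,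
    coeff_monomial, coeff_monomial, if_neg m1_ne_m2, if_pos rfl, if_neg m3_ne_m2,
    if_neg m4_ne_m2]
  norm_num

lemma coeff_B_m4 : coeff m4 (B K) = 1 := by
  rw [B_eq, coeff_add, coeff_add, coeff_add, coeff_monomial, coeff_monomial,
    coeff_monomial, coeff_monomial, if_neg m1_ne_m4, if_neg m2_ne_m4, if_neg m3_ne_m4,
    if_pos rfl]
  norm_num

lemma coeff_A_pow (m : ℕ) :
    coeff (Finsupp.single 1 (4 * m)) ((B K) ^ m) = 1 := by
  induction m with
  | zero => simp
  | succ k ih =>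
    have hs : Finsupp.single (1 : Fin 3) (4 * (k + 1)) = Finsupp.single 1 (4 * k) + m2 := by
      rw [m2, ← Finsupp.single_add, show 4 * k + 4 = 4 * (k + 1) by omega]
    rw [pow_succ, hs,
      coeff_mul_unique ((B K) ^ k) (B K) (Finsupp.single 1 (4 * k)) m2 ?_,
      ih, coeff_B_m2, one_mul]
    intro x hx y hy hxy
    have h0 : x 0 + y 0 = 0 := by
      have h := DFunLike.congr_fun hxy 0
      simp [Finsupp.add_apply, Finsupp.single_apply, m2_apply.1] at h
      omega
    have h2 : x 2 + y 2 = 0 := by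
      have h := DFunLike.congr_fun hxy 2
      simp [Finsupp.add_apply, Finsupp.single_apply, m2_apply.2.2] at h
      omega
    have hy2 : y = m2 := by
      rcases support_B y hy with h | h | h | h <;> subst h
      · exfalso; rw [m1_apply.1] at h0; omega
      · rfl
      · exfalso; rw [m3_apply.2.2] at h2; omega
      · exfalso; rw [m4_apply.2.2] at h2; omega
    subst hy2
    exact ⟨by rwa [add_left_inj] at hxy, rfl⟩

lemma coeff_C_pow (m : ℕ) :
    coeff (Finsupp.single 1 (2 * m) + Finsupp.single 2 (4 * m)) ((B K) ^ m) = 1 := by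
  induction m with
  | zero => simp
  | succ k ih =>
    have hs : Finsupp.single (1 : Fin 3) (2 * (k + 1)) + Finsupp.single 2 (4 * (k + 1))
        = (Finsupp.single 1 (2 * k) + Finsupp.single 2 (4 * k)) + m4 := by
      rw [m4, show 2 * (k + 1) = 2 * k + 2 by omega, show 4 * (k + 1) = 4 * k + 4 by omega,
        Finsupp.single_add, Finsupp.single_add]
      abel
    rw [pow_succ, hs,
      coeff_mul_unique ((B K) ^ k) (B K) _ m4 ?_,
      ih, coeff_B_m4, one_mul]
    intro x hx y hy hxy
    rw [← hs] at hxy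
    have h0 : x 0 + y 0 = 0 := by
      have h := DFunLike.congr_fun hxy 0
      simp [Finsupp.add_apply, Finsupp.single_apply] at h
      omega
    have h2 : x 2 + y 2 = 4 * (k + 1) := by
      have h := DFunLike.congr_fun hxy 2
      simp [Finsupp.add_apply, Finsupp.single_apply] at h
      omega
    have hx2 : 4 * x 0 + x 2 ≤ 4 * k := (weight_B_pow k x hx).2.1
    have hy2 : y = m4 := by
      rcases support_B y hy with h | h | h | h <;> subst h
      · exfalso; rw [m1_apply.1] at h0; omega
      · exfalso; rw [m2_apply.2.2] at h2; omega
      · exfalso; rw [m3_apply.2.2] at h2; omega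
      · rfl
    subst hy2
    rw [hs] at hxy
    exact ⟨by rwa [add_left_inj] at hxy, rfl⟩

end XmznAux

open XmznAux in
/-- The polynomial `(x^m z^n)β = (x + y²(y+z²)²)^m z^n` lies in `P*_{m,n}`. -/
theorem xmzn_beta_in_Pstar (m n : ℕ) (hm : 1 ≤ m) :
    let Q : MvPolynomial (Fin 3) K :=
      (X 0 + (X 1) ^ 2 * (X 1 + (X 2) ^ 2) ^ 2) ^ m * (X 2) ^ n
    (∀ d ∈ Q.support,
        4 * d 0 + d 1 ≤ 4 * m ∧ 4 * d 0 + d 2 ≤ 4 * m + n ∧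
        8 * d 0 + 2 * d 1 + d 2 ≤ 8 * m + n) ∧
    HasLdeg2 Q 0 (4 * m) n ∧ HasLdeg3 Q 0 (2 * m) (4 * m + n) := by
  intro Q
  have hQ : Q = (B K) ^ m * (X 2) ^ n := rfl
  have hsupp : ∀ d ∈ Q.support,
      4 * d 0 + d 1 ≤ 4 * m ∧ 4 * d 0 + d 2 ≤ 4 * m + n ∧
      8 * d 0 + 2 * d 1 + d 2 ≤ 8 * m + n := by
    intro d hd
    rw [hQ] at hd
    obtain ⟨u, hu, v, hv, huv⟩ := Finset.mem_add.mp (support_mul _ _ hd)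
    rw [support_X_pow] at hv
    have hv' : v = Finsupp.single 2 n := Finset.mem_singleton.mp hv
    subst hv'
    obtain ⟨h1, h2, h3⟩ := weight_B_pow m u hu
    have e0 : d 0 = u 0 := by
      rw [← huv]; simp [Finsupp.add_apply, Finsupp.single_apply]
    have e1 : d 1 = u 1 := by
      rw [← huv]; simp [Finsupp.add_apply, Finsupp.single_apply]
    have e2 : d 2 = u 2 + n := by
      rw [← huv]; simp [Finsupp.add_apply, Finsupp.single_apply]
    omega
  refine ⟨hsupp, ⟨?_, ?_⟩, ⟨?_, ?_⟩⟩
  · refine ⟨Finsupp.single 1 (4 * m) + Finsupp.single 2 n, ?_, ?_, ?_, ?_⟩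
    · rw [mem_support_iff, hQ, X_pow_eq_monomial, coeff_mul_monomial, coeff_A_pow, one_mul]
      exact one_ne_zero
    · simp [Finsupp.add_apply, Finsupp.single_apply]
    · simp [Finsupp.add_apply, Finsupp.single_apply]
    · simp [Finsupp.add_apply, Finsupp.single_apply]
  · intro d hd
    obtain ⟨h1, h2, h3⟩ := hsupp d hd
    rcases lt_or_eq_of_le (show d 1 ≤ 4 * m by omega) with h | h
    · exact lkey_le (Or.inl h)
    · rcases lt_or_eq_of_le (show d 2 ≤ n by omega) with h' | h'
      · exact lkey_le (Or.inr ⟨h, Or.inl h'⟩)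
      · exact lkey_le (Or.inr ⟨h, Or.inr ⟨h', by omega⟩⟩)
  · refine ⟨Finsupp.single 1 (2 * m) + Finsupp.single 2 (4 * m + n), ?_, ?_, ?_, ?_⟩
    · have hsplit : Finsupp.single (1 : Fin 3) (2 * m) + Finsupp.single 2 (4 * m + n)
          = (Finsupp.single 1 (2 * m) + Finsupp.single 2 (4 * m)) + Finsupp.single 2 n := by
        rw [add_assoc, ← Finsupp.single_add]
      rw [mem_support_iff, hQ, X_pow_eq_monomial, hsplit, coeff_mul_monomial,
        coeff_C_pow, one_mul]
      exact one_ne_zero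
    · simp [Finsupp.add_apply, Finsupp.single_apply]
    · simp [Finsupp.add_apply, Finsupp.single_apply]
    · simp [Finsupp.add_apply, Finsupp.single_apply]
  · intro d hd
    obtain ⟨h1, h2, h3⟩ := hsupp d hd
    rcases lt_or_eq_of_le (show d 2 ≤ 4 * m + n by omega) with h | h
    · exact lkey_le (Or.inl h)
    · exact lkey_le (Or.inr ⟨h, Or.inr ⟨by omega, by omega⟩⟩)
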